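/- Let u : ℕ → ℝ with u ∈ Λ. Then Δ_u ≠ ∅ if and only if there exists k ∈ ℕ with u_k ≥ L(u). -/
import Mathlib


open Set Filter

/-- `V u` is the supremum of the sequence `u` (real `sSup`, junk value if unbounded). -/
noncomputable def V (u : ℕ → ℝ) : ℝ := sSup (Set.range u)

/-- `L u` is the limit superior of `u` taken in the extended reals. -/
noncomputable def L (u : ℕ → ℝ) : EReal :=
  Filter.limsup (fun n => ((u n : ℝ) : EReal)) Filter.atTop

/-- `u ∈ Λ` : the supremum of `u` is finite, i.e. `u` is bounded above. -/
def MemLambda (u : ℕ → ℝ) : Prop := BddAbove (Set.range u)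

/-- `Δ_u = {k : max_{0 ≤ j ≤ k} u_j ≥ sup_{j > k} u_j}`. -/
noncomputable def Delta (u : ℕ → ℝ) : Set ℕ :=
  {k | sSup (u '' Set.Ioi k) ≤ sSup (u '' Set.Iic k)}

/-- `Δˢ_u = {k : max_{0 ≤ j ≤ k} u_j > sup_{j > k} u_j}`. -/
noncomputable def DeltaS (u : ℕ → ℝ) : Set ℕ :=
  {k | sSup (u '' Set.Ioi k) < sSup (u '' Set.Iic k)}

/-- `Argmax u = {k : u k = V u}`. -/
noncomputable def Argmax (u : ℕ → ℝ) : Set ℕ := {k | u k = V u}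


/-- for u ∈ Λ, Δ_u ≠ ∅ iff some term of u is at least the limsup. -/
theorem delta_nonempty_iff (u : ℕ → ℝ) (hu : MemLambda u) :
    (Delta u).Nonempty ↔ ∃ k : ℕ, L u ≤ ((u k : ℝ) : EReal) := by
  have hbdd : ∀ s : Set ℕ, BddAbove (u '' s) := fun s =>
    hu.mono (Set.image_subset_range u s)
  constructor
  · rintro ⟨k, hk⟩
    -- the max over Iic k is attained at some j
    have hfin : (u '' Set.Iic k).Finite := (Set.finite_Iic k).image u
    have hne : (u '' Set.Iic k).Nonempty := (Set.nonempty_Iic).image u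
    obtain ⟨j, hj, hje⟩ := hne.csSup_mem hfin
    refine ⟨j, ?_⟩
    have h1 : L u ≤ ((sSup (u '' Set.Ioi k) : ℝ) : EReal) := by
      refine Filter.limsup_le_of_le (by isBoundedDefault) ?_
      filter_upwards [Filter.eventually_gt_atTop k] with n hn
      exact EReal.coe_le_coe_iff.2 (le_csSup (hbdd _) ⟨n, hn, rfl⟩)
    calc L u ≤ ((sSup (u '' Set.Ioi k) : ℝ) : EReal) := h1
      _ ≤ ((sSup (u '' Set.Iic k) : ℝ) : EReal) := EReal.coe_le_coe_iff.2 hk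
      _ = ((u j : ℝ) : EReal) := by rw [hje]
  · rintro ⟨k, hk⟩
    by_contra h
    rw [Set.not_nonempty_iff_eq_empty] at h
    have hlt : ∀ m : ℕ, sSup (u '' Set.Iic m) < sSup (u '' Set.Ioi m) := by
      intro m
      by_contra hm
      exact absurd h (Set.nonempty_iff_ne_empty.1 ⟨m, not_lt.1 hm⟩)
    have step : ∀ m : ℕ, ∃ n > m, sSup (u '' Set.Iic m) < u n := by
      intro m
      obtain ⟨b, ⟨n, hn, rfl⟩, hb⟩ :=
        exists_lt_of_lt_csSup ((Set.nonempty_Ioi).image u) (hlt m)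
      exact ⟨n, hn, hb⟩
    obtain ⟨n, hnk, hn⟩ := step k
    have hukn : u k < u n := lt_of_le_of_lt (le_csSup (hbdd _) (Set.mem_image_of_mem u (Set.mem_Iic.2 le_rfl))) hn
    have hLn : L u < ((u n : ℝ) : EReal) :=
      lt_of_le_of_lt hk (EReal.coe_lt_coe_iff.2 hukn)
    have hfreq : ∃ᶠ m in Filter.atTop, ((u n : ℝ) : EReal) ≤ ((u m : ℝ) : EReal) := by
      rw [Filter.frequently_atTop]
      intro a
      obtain ⟨m', hm', hum'⟩ := step (max a n)
      refine ⟨m', le_trans (le_max_left a n) hm'.le, ?_⟩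
      exact EReal.coe_le_coe_iff.2
        (le_trans (le_csSup (hbdd _) (Set.mem_image_of_mem u (Set.mem_Iic.2 (le_max_right a n)))) hum'.le)
    have : ((u n : ℝ) : EReal) ≤ L u := Filter.le_limsup_of_frequently_le hfreq
    exact absurd this (not_le.2 hLn)
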